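/- Let (μ_n)_{n≥1} be Borel probability measures on ℝ, each with finite second moment; write m_n for the mean of μ_n, m₂(μ_n) for its second moment, and v_n for its variance. Let (b_n)_{n≥1} be real numbers with 0 < b_1 < b_2 < ⋯ and b_n → ∞ such that ∑_{k=1}^∞ v_k / b_k² < ∞. Let (X_n)_{n≥1} be a sequence of real random variables on a probability space, adapted to a filtration (𝓕_n), such that X_1 has distribution μ_1 and for each n ≥ 2 the conditional distribution of X_n given 𝓕_{n-1} is p_n(X_{n-1}, ·), where p_n is a Markov transition kernel on ℝ satisfying ∫ y p_n(x, dy) = x + m_n and ∫ y² p_n(x, dy) = x² + 2 m_n x + m₂(μ_n) for every x ∈ ℝ. Then (X_n − ∑_{k=1}^n m_k)/b_n converges to 0 in probability as n → ∞. -/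

import Mathlib

open MeasureTheory ProbabilityTheory Filter

lemma aux_integrable_id {ν : Measure ℝ} [IsFiniteMeasure ν]
    (h2 : Integrable (fun t : ℝ => t ^ 2) ν) : Integrable (fun t : ℝ => t) ν := by
  refine (h2.add (integrable_const 1)).mono' measurable_id.aestronglyMeasurable ?_
  filter_upwards with t
  simp only [Real.norm_eq_abs, Pi.add_apply]
  nlinarith [sq_nonneg (|t| - 1), abs_nonneg t, sq_abs t]
lemma aux_kronecker (v b : ℕ → ℝ) (hv : ∀ k, 0 ≤ v k)
    (hbpos : ∀ n, 1 ≤ n → 0 < b n)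
    (hble : ∀ k n, 1 ≤ k → k ≤ n → b k ≤ b n)
    (hbtop : Tendsto b atTop atTop)
    (hsum : Summable fun k : ℕ => v (k + 1) / b (k + 1) ^ 2) :
    Tendsto (fun n => (∑ k ∈ Finset.Icc 1 n, v k) / b n ^ 2) atTop (nhds 0) := by
  have hVrw : ∀ n : ℕ, (∑ k ∈ Finset.Icc 1 n, v k) = ∑ i ∈ Finset.range n, v (i + 1) := by
    intro n
    induction n with
    | zero => simp
    | succ n ih => rw [Finset.sum_Icc_succ_top (by omega), Finset.sum_range_succ, ih]
  set g : ℕ → ℝ := fun i => v (i + 1) / b (i + 1) ^ 2 with hg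
  set s : ℕ → ℝ := fun n => ∑ i ∈ Finset.range n, g i with hs
  have hcauchy : CauchySeq s := hsum.hasSum.tendsto_sum_nat.cauchySeq
  rw [Metric.tendsto_atTop]
  intro ε hε
  obtain ⟨N, hN⟩ := Metric.cauchySeq_iff'.mp hcauchy (ε / 2) (half_pos hε)
  set C : ℝ := ∑ i ∈ Finset.range N, v (i + 1) with hC
  have hb2top : Tendsto (fun n => b n ^ 2) atTop atTop := by
    have := hbtop.atTop_mul_atTop₀ hbtop
    simpa [pow_two] using this
  have h1 : Tendsto (fun n => C / b n ^ 2) atTop (nhds 0) :=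
    tendsto_const_nhds.div_atTop hb2top
  obtain ⟨N2, hN2⟩ := Metric.tendsto_atTop.mp h1 (ε / 2) (half_pos hε)
  refine ⟨max (max N N2) 1, fun n hn => ?_⟩
  have hnN : N ≤ n := le_trans (le_trans (le_max_left _ _) (le_max_left _ _)) hn
  have hnN2 : N2 ≤ n := le_trans (le_trans (le_max_right _ _) (le_max_left _ _)) hn
  have hn1 : 1 ≤ n := le_trans (le_max_right _ _) hn
  have hbn : 0 < b n := hbpos n hn1
  have hbn2 : 0 < b n ^ 2 := by positivity
  have hsplit : (∑ i ∈ Finset.range n, v (i + 1)) = C + ∑ i ∈ Finset.Ico N n, v (i + 1) := by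
    have h0 := Finset.sum_Ico_consecutive (fun i => v (i + 1)) (Nat.zero_le N) hnN
    simp only [← Finset.range_eq_Ico] at h0
    linarith
  have hsdiff : s n - s N = ∑ i ∈ Finset.Ico N n, g i := by
    have h0 := Finset.sum_Ico_consecutive g (Nat.zero_le N) hnN
    simp only [← Finset.range_eq_Ico] at h0
    simp only [hs]
    linarith
  have hterm2 : (∑ i ∈ Finset.Ico N n, v (i + 1)) / b n ^ 2 ≤ s n - s N := by
    rw [Finset.sum_div, hsdiff]
    refine Finset.sum_le_sum fun i hi => ?_
    have hi2 := (Finset.mem_Ico.mp hi).2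
    have hbi : 0 < b (i + 1) := hbpos _ (Nat.le_add_left _ _)
    have hle : b (i + 1) ≤ b n := hble (i + 1) n (Nat.le_add_left _ _) hi2
    have hsq : b (i + 1) ^ 2 ≤ b n ^ 2 := by nlinarith
    exact div_le_div_of_nonneg_left (hv _) (by positivity) hsq
  have hVn : 0 ≤ (∑ k ∈ Finset.Icc 1 n, v k) := Finset.sum_nonneg fun k _ => hv k
  rw [Real.dist_0_eq_abs, abs_of_nonneg (by positivity)]
  have e1 : s n - s N < ε / 2 := by
    have := hN n hnN
    rw [Real.dist_eq] at this
    calc s n - s N ≤ |s n - s N| := le_abs_self _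
    _ < ε / 2 := this
  have e2 : C / b n ^ 2 < ε / 2 := by
    have := hN2 n hnN2
    rw [Real.dist_0_eq_abs] at this
    calc C / b n ^ 2 ≤ |C / b n ^ 2| := le_abs_self _
    _ < ε / 2 := this
  calc (∑ k ∈ Finset.Icc 1 n, v k) / b n ^ 2
      = C / b n ^ 2 + (∑ i ∈ Finset.Ico N n, v (i + 1)) / b n ^ 2 := by
        rw [hVrw, hsplit]; ring
    _ < ε / 2 + ε / 2 := by linarith
    _ = ε := by ring

lemma aux_step (ν : Measure ℝ) [IsProbabilityMeasure ν] (κ : Kernel ℝ ℝ) [IsMarkovKernel κ]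
    (mn m2n : ℝ)
    (hκint : ∀ x : ℝ, Integrable (fun y : ℝ => y ^ 2) (κ x))
    (hκmean : ∀ x : ℝ, (∫ y : ℝ, y ∂(κ x)) = x + mn)
    (hκsq : ∀ x : ℝ, (∫ y : ℝ, y ^ 2 ∂(κ x)) = x ^ 2 + 2 * mn * x + m2n)
    (hν2 : Integrable (fun t : ℝ => t ^ 2) ν) :
    Integrable (fun t : ℝ => t ^ 2) ((ν ⊗ₘ κ).snd) ∧
      (∫ t, t ∂((ν ⊗ₘ κ).snd)) = (∫ t, t ∂ν) + mn ∧
      (∫ t, t ^ 2 ∂((ν ⊗ₘ κ).snd)) =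
        (∫ t, t ^ 2 ∂ν) + 2 * mn * (∫ t, t ∂ν) + m2n := by
  have hν1 : Integrable (fun t : ℝ => t) ν := aux_integrable_id hν2
  -- integrability of the polynomial bound
  have hpoly : Integrable (fun x : ℝ => x ^ 2 + 2 * mn * x + m2n) ν :=
    (hν2.add (hν1.const_mul (2 * mn))).add (integrable_const m2n)
  have hpoly1 : Integrable (fun x : ℝ => x ^ 2 + 2 * mn * x + m2n + 1) ν :=
    hpoly.add (integrable_const 1)
  -- squares integrable on compProd
  have hsqmeas : AEStronglyMeasurable (fun z : ℝ × ℝ => z.2 ^ 2) (ν ⊗ₘ κ) :=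
    (measurable_snd.pow_const 2).aestronglyMeasurable
  have hsq_comp : Integrable (fun z : ℝ × ℝ => z.2 ^ 2) (ν ⊗ₘ κ) := by
    rw [Measure.integrable_compProd_iff hsqmeas]
    constructor
    · filter_upwards with x using hκint x
    · refine hpoly.congr ?_
      filter_upwards with x
      rw [← hκsq x]
      refine (integral_congr_ae ?_).symm
      filter_upwards with y
      simp [abs_of_nonneg (sq_nonneg y), Real.norm_eq_abs, sq_abs]
  have hidmeas : AEStronglyMeasurable (fun z : ℝ × ℝ => z.2) (ν ⊗ₘ κ) :=
    measurable_snd.aestronglyMeasurable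
  have hid_comp : Integrable (fun z : ℝ × ℝ => z.2) (ν ⊗ₘ κ) := by
    rw [Measure.integrable_compProd_iff hidmeas]
    constructor
    · filter_upwards with x
      exact aux_integrable_id (hκint x)
    · refine hpoly1.mono' ?_ ?_
      · have : StronglyMeasurable (Function.uncurry fun (_ : ℝ) (y : ℝ) => ‖y‖) :=
          (measurable_snd.norm).stronglyMeasurable
        exact (this.integral_kernel_prod_right (κ := κ)).aestronglyMeasurable
      · filter_upwards with x
        have h1 : (∫ y, ‖y‖ ∂(κ x)) ≤ ∫ y, y ^ 2 + 1 ∂(κ x) := by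
          refine integral_mono (aux_integrable_id (hκint x)).norm
            ((hκint x).add (integrable_const 1)) ?_
          intro y
          simp only [Real.norm_eq_abs]
          nlinarith [sq_nonneg (|y| - 1), abs_nonneg y, sq_abs y]
        have h2 : (∫ y, y ^ 2 + (1:ℝ) ∂(κ x)) = x ^ 2 + 2 * mn * x + m2n + 1 := by
          rw [integral_add (hκint x) (integrable_const 1), hκsq x]
          simp
        rw [Real.norm_eq_abs, abs_of_nonneg (integral_nonneg fun y => norm_nonneg y)]
        exact h1.trans_eq h2
  -- transfer along snd
  have hint2 : Integrable (fun t : ℝ => t ^ 2) ((ν ⊗ₘ κ).snd) := by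
    rw [Measure.snd, integrable_map_measure (show Measurable fun t : ℝ => t ^ 2 by measurability).aestronglyMeasurable
      measurable_snd.aemeasurable]
    exact hsq_comp
  have hint1 : Integrable (fun t : ℝ => t) ((ν ⊗ₘ κ).snd) := by
    rw [Measure.snd, integrable_map_measure (show Measurable fun t : ℝ => t by measurability).aestronglyMeasurable
      measurable_snd.aemeasurable]
    exact hid_comp
  refine ⟨hint2, ?_, ?_⟩
  · rw [Measure.snd, integral_map measurable_snd.aemeasurable
      (show Measurable fun t : ℝ => t by measurability).aestronglyMeasurable, Measure.integral_compProd hid_comp]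
    rw [show (∫ a, ∫ y, y ∂(κ a) ∂ν) = ∫ a, a + mn ∂ν from
      integral_congr_ae (by filter_upwards with a using hκmean a)]
    rw [integral_add hν1 (integrable_const mn)]
    simp
  · rw [Measure.snd, integral_map measurable_snd.aemeasurable
      (show Measurable fun t : ℝ => t ^ 2 by measurability).aestronglyMeasurable, Measure.integral_compProd hsq_comp]
    rw [show (∫ a, ∫ y, y ^ 2 ∂(κ a) ∂ν) = ∫ a, a ^ 2 + 2 * mn * a + m2n ∂ν from
      integral_congr_ae (by filter_upwards with a using hκsq a)]
    have i1 : Integrable (fun a : ℝ => 2 * mn * a) ν := hν1.const_mul _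
    rw [integral_add (f := fun a : ℝ => a ^ 2 + 2 * mn * a) (hν2.add i1) (integrable_const m2n),
      integral_add (f := fun a : ℝ => a ^ 2) hν2 i1, integral_const_mul]
    simp

lemma aux_law {Ω : Type*} {mΩ : MeasurableSpace Ω} (P : Measure Ω) [IsProbabilityMeasure P]
    {W Y : Ω → ℝ} (hW : Measurable W) (hY : Measurable Y)
    (κ : Kernel ℝ ℝ) [IsMarkovKernel κ]
    (heq : ∀ B : Set ℝ, MeasurableSet B → P (Y ⁻¹' B) = ∫⁻ ω, κ (W ω) B ∂P) :
    P.map Y = ((P.map W) ⊗ₘ κ).snd := by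
  have hPW : IsProbabilityMeasure (P.map W) := Measure.isProbabilityMeasure_map hW.aemeasurable
  ext B hB
  have hpre : ∀ a : ℝ, Prod.mk a ⁻¹' (Prod.snd ⁻¹' B) = B := fun a => rfl
  rw [Measure.map_apply hY hB, heq B hB, Measure.snd_apply hB,
    Measure.compProd_apply (measurable_snd hB)]
  simp only [hpre]
  rw [lintegral_map (κ.measurable_coe hB) hW]
/-- Theorem 1.1, Markov chain form: Let `(μ_n)_{n≥1}` be Borel
probability laws on `ℝ` with finite second moments, means `m_n`, second moments
`m₂ n`, and variances `v_n`. Let `0 < b_1 < b_2 < ⋯ → ∞` with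
`∑_{k≥1} v_k / b_k² < ∞`. Let `(X_n)_{n≥1}` be adapted to a filtration `(𝓕_n)`,
with `X_1 ∼ μ_1` and, for `n ≥ 2`, the conditional distribution of `X_n` given
`𝓕_{n-1}` equal to `p_n(X_{n-1}, ·)`, where the Markov kernels `p_n` satisfy
`∫ y p_n(x,dy) = x + m_n` and `∫ y² p_n(x,dy) = x² + 2 m_n x + m₂(μ_n)` for all `x`.
Then `(X_n - ∑_{k=1}^n m_k)/b_n → 0` in probability. -/
theorem monotone_lln_markov_chain
    {Ω : Type*} {mΩ : MeasurableSpace Ω} (P : Measure Ω) [IsProbabilityMeasure P]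
    (μ : ℕ → Measure ℝ) [∀ n, IsProbabilityMeasure (μ n)]
    (hμ2 : ∀ n, 1 ≤ n → Integrable (fun t : ℝ => t ^ 2) (μ n))
    (m m₂ v : ℕ → ℝ)
    (hm : ∀ n, m n = ∫ t : ℝ, t ∂(μ n))
    (hm₂ : ∀ n, m₂ n = ∫ t : ℝ, t ^ 2 ∂(μ n))
    (hv : ∀ n, v n = ProbabilityTheory.variance id (μ n))
    (b : ℕ → ℝ) (hb1 : 0 < b 1) (hbmono : ∀ n, 1 ≤ n → b n < b (n + 1))
    (hbtop : Tendsto b atTop atTop)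
    (hsum : Summable fun k : ℕ => v (k + 1) / b (k + 1) ^ 2)
    (𝓕 : Filtration ℕ mΩ)
    (X : ℕ → Ω → ℝ) (hXmeas : ∀ n, Measurable (X n)) (hadapted : StronglyAdapted 𝓕 X)
    (hX1 : P.map (X 1) = μ 1)
    (p : ℕ → Kernel ℝ ℝ) [∀ n, IsMarkovKernel (p n)]
    (hpint : ∀ n, 2 ≤ n → ∀ x : ℝ, Integrable (fun y : ℝ => y ^ 2) (p n x))
    (hpmean : ∀ n, 2 ≤ n → ∀ x : ℝ, (∫ y : ℝ, y ∂(p n x)) = x + m n)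
    (hpsq : ∀ n, 2 ≤ n → ∀ x : ℝ,
      (∫ y : ℝ, y ^ 2 ∂(p n x)) = x ^ 2 + 2 * m n * x + m₂ n)
    (hcond : ∀ n, 2 ≤ n → ∀ B : Set ℝ, MeasurableSet B →
      P[(X n ⁻¹' B).indicator (fun _ => (1 : ℝ)) | 𝓕 (n - 1)]
        =ᵐ[P] fun ω => (p n (X (n - 1) ω) B).toReal) :
    TendstoInMeasure P
      (fun n ω => (X n ω - ∑ k ∈ Finset.Icc 1 n, m k) / b n) atTop 0 := by
  -- positivity/monotonicity facts for `b`
  have hbpos : ∀ n, 1 ≤ n → 0 < b n := by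
    intro n hn
    induction n, hn using Nat.le_induction with
    | base => exact hb1
    | succ n hn ih => exact lt_trans ih (hbmono n hn)
  have hble : ∀ k n, 1 ≤ k → k ≤ n → b k ≤ b n := by
    intro k n hk hkn
    induction n, hkn using Nat.le_induction with
    | base => exact le_rfl
    | succ n hkn ih => exact ih.trans (hbmono n (hk.trans hkn)).le
  have hvnonneg : ∀ k, 0 ≤ v k := fun k => (hv k) ▸ variance_nonneg _ _
  -- second moment decomposition for the `μ`'s
  have hm₂v : ∀ k, 1 ≤ k → m₂ k = v k + m k ^ 2 := by
    intro k hk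
    have hML : MemLp (fun t : ℝ => t) 2 (μ k) := by
      rw [memLp_two_iff_integrable_sq measurable_id'.aestronglyMeasurable]
      exact hμ2 k hk
    have h := variance_eq_sub hML
    have hvar : variance id (μ k) = variance (fun t : ℝ => t) (μ k) := rfl
    have hsq : (μ k)[(fun t : ℝ => t) ^ 2] = ∫ t : ℝ, t ^ 2 ∂(μ k) := by
      refine integral_congr_ae ?_
      filter_upwards with t
      simp
    rw [hv k, hm k, hm₂ k, hvar, h, hsq]
    ring
  -- the law recursion
  have hlaw : ∀ n, 2 ≤ n → P.map (X n) = ((P.map (X (n - 1))) ⊗ₘ p n).snd := by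
    intro n hn
    refine aux_law P (hXmeas (n - 1)) (hXmeas n) (p n) ?_
    intro B hB
    have h1 := hcond n hn B hB
    have hint : Integrable ((X n ⁻¹' B).indicator fun _ => (1 : ℝ)) P :=
      (integrable_const (1 : ℝ)).indicator ((hXmeas n) hB)
    have h2 : ∫ ω, (p n (X (n - 1) ω) B).toReal ∂P
        = ∫ ω, ((X n ⁻¹' B).indicator fun _ => (1 : ℝ)) ω ∂P := by
      have h0 := integral_condExp (μ := P) (𝓕.le (n - 1))
        (f := (X n ⁻¹' B).indicator fun _ => (1 : ℝ))
      rw [← h0]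
      exact integral_congr_ae h1.symm
    have hmeasf : Measurable fun ω => p n (X (n - 1) ω) B :=
      ((p n).measurable_coe hB).comp (hXmeas (n - 1))
    have h3 : ∫ ω, (p n (X (n - 1) ω) B).toReal ∂P
        = (∫⁻ ω, p n (X (n - 1) ω) B ∂P).toReal :=
      integral_toReal hmeasf.aemeasurable (by filter_upwards with ω using measure_lt_top _ _)
    have h4 : ∫ ω, ((X n ⁻¹' B).indicator fun _ => (1 : ℝ)) ω ∂P
        = (P (X n ⁻¹' B)).toReal := by
      rw [integral_indicator_const (1 : ℝ) ((hXmeas n) hB)]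
      simp [Measure.real]
    have h5 : (∫⁻ ω, p n (X (n - 1) ω) B ∂P) ≠ ⊤ := by
      have hle1 : (∫⁻ ω, p n (X (n - 1) ω) B ∂P) ≤ ∫⁻ ω, 1 ∂P :=
        lintegral_mono fun ω => prob_le_one
      refine ne_top_of_le_ne_top ?_ hle1
      simp
    refine (ENNReal.toReal_eq_toReal_iff' (measure_ne_top _ _) h5).mp ?_
    rw [← h4, ← h2, h3]
  -- moments of the laws of the `X n`
  have hmom : ∀ n, 1 ≤ n → Integrable (fun t : ℝ => t ^ 2) (P.map (X n)) ∧
      (∫ t, t ∂(P.map (X n))) = (∑ k ∈ Finset.Icc 1 n, m k) ∧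
      (∫ t, t ^ 2 ∂(P.map (X n)))
        = (∑ k ∈ Finset.Icc 1 n, v k) + (∑ k ∈ Finset.Icc 1 n, m k) ^ 2 := by
    intro n hn
    induction n, hn using Nat.le_induction with
    | base =>
      rw [hX1]
      refine ⟨hμ2 1 le_rfl, ?_, ?_⟩
      · simp [← hm 1]
      · rw [← hm₂ 1, hm₂v 1 le_rfl]
        simp
    | succ n hn ih =>
      haveI : IsProbabilityMeasure (P.map (X n)) :=
        Measure.isProbabilityMeasure_map (hXmeas n).aemeasurable
      have hl := hlaw (n + 1) (by omega)
      simp only [Nat.add_sub_cancel] at hl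
      obtain ⟨ih2, ihm, ihsq⟩ := ih
      have hstep := aux_step (P.map (X n)) (p (n + 1)) (m (n + 1)) (m₂ (n + 1))
        (hpint (n + 1) (by omega)) (hpmean (n + 1) (by omega)) (hpsq (n + 1) (by omega)) ih2
      rw [hl]
      refine ⟨hstep.1, ?_, ?_⟩
      · rw [hstep.2.1, ihm, Finset.sum_Icc_succ_top (by omega : 1 ≤ n + 1)]
      · rw [hstep.2.2, ihm, ihsq, Finset.sum_Icc_succ_top (by omega : 1 ≤ n + 1),
          Finset.sum_Icc_succ_top (by omega : 1 ≤ n + 1), hm₂v (n + 1) (by omega)]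
        ring
  -- Chebyshev bound
  rw [tendstoInMeasure_iff_dist]
  intro ε hε
  have hub : ∀ n, 1 ≤ n →
      P {ω | ε ≤ dist ((X n ω - ∑ k ∈ Finset.Icc 1 n, m k) / b n) ((0 : ℕ → Ω → ℝ) n ω)}
        ≤ ENNReal.ofReal ((∑ k ∈ Finset.Icc 1 n, v k) / b n ^ 2 / ε ^ 2) := by
    intro n hn
    have hbn := hbpos n hn
    obtain ⟨h2, hmean, hsq⟩ := hmom n hn
    have hMem : MemLp (X n) 2 P := by
      rw [memLp_two_iff_integrable_sq (hXmeas n).aestronglyMeasurable]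
      have := h2
      rw [integrable_map_measure
        (show Measurable fun t : ℝ => t ^ 2 from measurable_id'.pow_const 2).aestronglyMeasurable
        (hXmeas n).aemeasurable] at this
      exact this
    have hEX : P[X n] = ∑ k ∈ Finset.Icc 1 n, m k := by
      rw [← hmean, integral_map (hXmeas n).aemeasurable
        (measurable_id' : Measurable fun t : ℝ => t).aestronglyMeasurable]
    have hsqX : P[(X n) ^ 2] = ∫ t, t ^ 2 ∂(P.map (X n)) := by
      rw [integral_map (hXmeas n).aemeasurable
        (show Measurable fun t : ℝ => t ^ 2 from measurable_id'.pow_const 2).aestronglyMeasurable]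
      refine integral_congr_ae ?_
      filter_upwards with ω
      simp
    have hVar : variance (X n) P = ∑ k ∈ Finset.Icc 1 n, v k := by
      rw [variance_eq_sub hMem, hEX, hsqX, hsq]
      ring
    have hset : {ω | ε ≤ dist ((X n ω - ∑ k ∈ Finset.Icc 1 n, m k) / b n)
          ((0 : ℕ → Ω → ℝ) n ω)}
        = {ω | ε * b n ≤ |X n ω - P[X n]|} := by
      ext ω
      rw [hEX]
      simp only [Set.mem_setOf_eq, Pi.zero_apply, Real.dist_0_eq_abs, abs_div,
        abs_of_pos hbn]
      rw [le_div_iff₀ hbn]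
    rw [hset]
    have hcheb := meas_ge_le_variance_div_sq (μ := P) hMem (mul_pos hε hbn)
    rw [hVar] at hcheb
    refine hcheb.trans_eq ?_
    congr 1
    rw [mul_pow]
    ring
  have hu : Tendsto (fun n => ENNReal.ofReal
      ((∑ k ∈ Finset.Icc 1 n, v k) / b n ^ 2 / ε ^ 2)) atTop (nhds 0) := by
    have h0 := aux_kronecker v b hvnonneg hbpos hble hbtop hsum
    have h1 : Tendsto (fun n => (∑ k ∈ Finset.Icc 1 n, v k) / b n ^ 2 / ε ^ 2)
        atTop (nhds 0) := by
      simpa using h0.div_const (ε ^ 2)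
    have := ENNReal.tendsto_ofReal h1
    simpa using this
  refine tendsto_of_tendsto_of_tendsto_of_le_of_le' tendsto_const_nhds hu ?_ ?_
  · filter_upwards with n using zero_le
  · filter_upwards [eventually_ge_atTop 1] with n hn using hub n hn
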